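/- Discount-factor thresholds: there exist δ̲ and δ̄ with 0 ≤ δ̲ ≤ δ̄ ≤ 1 such that for every δ ∈ (0,1): (i) some optimal contract at δ has a knowledge sequence that is not identically 0 if and only if δ > δ̲; (ii) if δ < δ̄ then s̄*(δ) < 1, and if δ > δ̄ then s̄*(δ) = 1, where s̄*(δ) denotes the smallest maximizer of s ↦ δ·π(s) + w(s) on [0,1]. -/

import Mathlib

open Set Filter Topology

/-- Principal's continuation value `Π_t(s,p) = Σ_{τ=t}^∞ δ^{τ−t}(π(s_τ) − p_τ)`. -/
noncomputable def PiVal (δ : ℝ) (π : ℝ → ℝ) (s p : ℕ → ℝ) (t : ℕ) : ℝ :=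
  ∑' k : ℕ, δ ^ k * (π (s (t + k)) - p (t + k))

/-- Expert's continuation value `W_t(s,p) = Σ_{τ=t}^∞ δ^{τ−t}(w(s_τ) + p_τ)`. -/
noncomputable def WVal (δ : ℝ) (w : ℝ → ℝ) (s p : ℕ → ℝ) (t : ℕ) : ℝ :=
  ∑' k : ℕ, δ ^ k * (w (s (t + k)) + p (t + k))

/-- A contract: `s` takes values in `[0,1]`, `s 0 = 0`, and `t ↦ δ^t·p_t` is summable. -/
def IsContract (δ : ℝ) (s p : ℕ → ℝ) : Prop :=
  (∀ t, s t ∈ Set.Icc (0 : ℝ) 1) ∧ s 0 = 0 ∧ Summable fun t => δ ^ t * p t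

/-- Implementability: feasibility (monotone `s`, nonnegative `p`) plus (P-IC) and (E-IC). -/
def Implementable (δ : ℝ) (π w : ℝ → ℝ) (s p : ℕ → ℝ) : Prop :=
  IsContract δ s p ∧ Monotone s ∧ (∀ t, 0 ≤ p t) ∧
  (∀ t, π (s t) / (1 - δ) ≤ PiVal δ π s p t) ∧
  (∀ t, w (s t) / (1 - δ) ≤ WVal δ w s p (t + 1))

/-- An optimal contract maximizes the principal's time-0 profit among implementable contracts. -/
def Optimal (δ : ℝ) (π w : ℝ → ℝ) (s p : ℕ → ℝ) : Prop :=
  Implementable δ π w s p ∧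
  ∀ s' p' : ℕ → ℝ, Implementable δ π w s' p' → PiVal δ π s' p' 0 ≤ PiVal δ π s p 0

/-- The set of maximizers of `x ↦ δ·π(x) + w(x)` on `[0,1]`. -/
def MaxSet (δ : ℝ) (π w : ℝ → ℝ) : Set ℝ :=
  {x | x ∈ Set.Icc (0 : ℝ) 1 ∧ ∀ y ∈ Set.Icc (0 : ℝ) 1, δ * π y + w y ≤ δ * π x + w x}

section Aux

variable {δ : ℝ}

lemma sumgeo (hδ0 : 0 < δ) (hδ1 : δ < 1) : Summable fun k : ℕ => δ ^ k :=
  summable_geometric_of_lt_one hδ0.le hδ1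

lemma sumbd (hδ0 : 0 < δ) (hδ1 : δ < 1) {f : ℕ → ℝ} {C : ℝ} (hf : ∀ n, |f n| ≤ C) :
    Summable fun k => δ ^ k * f k := by
  apply Summable.of_norm_bounded ((sumgeo hδ0 hδ1).mul_right C)
  intro k
  rw [Real.norm_eq_abs, abs_mul, abs_of_nonneg (pow_nonneg hδ0.le k)]
  exact mul_le_mul_of_nonneg_left (hf k) (pow_nonneg hδ0.le k)

lemma sum_shift (hδ0 : 0 < δ) {p : ℕ → ℝ} (hp : Summable fun t => δ ^ t * p t) (t : ℕ) :
    Summable fun k => δ ^ k * p (t + k) := by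
  have h1 : Summable fun k => δ ^ (k + t) * p (k + t) := (summable_nat_add_iff t).2 hp
  have h2 : Summable fun k => (δ ^ t)⁻¹ * (δ ^ (k + t) * p (k + t)) := h1.mul_left _
  refine h2.congr fun k => ?_
  have hδt : (δ : ℝ) ^ t ≠ 0 := pow_ne_zero _ hδ0.ne'
  have h3 : t + k = k + t := by omega
  rw [h3, pow_add]
  field_simp

lemma tsum_geo_const (hδ0 : 0 < δ) (hδ1 : δ < 1) (c : ℝ) :
    ∑' k : ℕ, δ ^ k * c = c / (1 - δ) := by
  rw [tsum_mul_right, tsum_geometric_of_lt_one hδ0.le hδ1]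
  rw [div_eq_mul_inv, mul_comm]

/-- head-tail decomposition of discounted sums -/
lemma tsum_head (hδ0 : 0 < δ) {f : ℕ → ℝ} (hf : ∀ t, Summable fun k => δ ^ k * f (t + k)) (t : ℕ) :
    ∑' k, δ ^ k * f (t + k) = f t + δ * ∑' k, δ ^ k * f (t + 1 + k) := by
  rw [Summable.tsum_eq_zero_add (hf t)]
  simp only [pow_zero, one_mul, Nat.add_zero]
  congr 1
  have : ∀ k : ℕ, δ ^ (k + 1) * f (t + (k + 1)) = δ * (δ ^ k * f (t + 1 + k)) := by
    intro k
    have h3 : t + (k + 1) = t + 1 + k := by omega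
    rw [h3]; ring
  rw [tsum_congr this, tsum_mul_left]

/-- Abel-type identity -/
lemma abel_id (hδ0 : 0 < δ) {f : ℕ → ℝ} (hf : Summable fun k => δ ^ k * f k) :
    (1 - δ) * ∑' k, δ ^ k * f k = f 0 + ∑' k, δ ^ (k + 1) * (f (k + 1) - f k) := by
  set S := ∑' k, δ ^ k * f k with hS
  have h1 : Summable fun k => δ ^ (k + 1) * f (k + 1) := (summable_nat_add_iff 1).2 hf
  have h2 : Summable fun k => δ ^ (k + 1) * f k := by
    refine (hf.mul_left δ).congr fun k => ?_
    rw [pow_succ]; ring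
  have h3 : ∑' k, δ ^ (k + 1) * f (k + 1) = S - f 0 := by
    have := Summable.tsum_eq_zero_add hf
    rw [pow_zero, one_mul] at this
    rw [hS, this]; ring
  have h4 : ∑' k, δ ^ (k + 1) * f k = δ * S := by
    rw [hS, ← tsum_mul_left]
    exact tsum_congr fun k => by rw [pow_succ]; ring
  have h5 : ∀ k : ℕ, δ ^ (k + 1) * (f (k + 1) - f k)
      = δ ^ (k + 1) * f (k + 1) - δ ^ (k + 1) * f k := fun k => by ring
  rw [tsum_congr h5, Summable.tsum_sub h1 h2, h3, h4]
  ring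


variable {π w : ℝ → ℝ}

section Main
variable {π w : ℝ → ℝ} {s p : ℕ → ℝ} {Cπ Cw : ℝ}

/-- summability of the π-part -/
lemma sum_pi (hδ0 : 0 < δ) (hδ1 : δ < 1) (hCπ : ∀ x ∈ Icc (0:ℝ) 1, |π x| ≤ Cπ)
    (hsm : ∀ t, s t ∈ Icc (0:ℝ) 1) (t : ℕ) :
    Summable fun k => δ ^ k * π (s (t + k)) :=
  sumbd hδ0 hδ1 fun n => hCπ _ (hsm (t + n))

lemma sum_pip (hδ0 : 0 < δ) (hδ1 : δ < 1) (hCπ : ∀ x ∈ Icc (0:ℝ) 1, |π x| ≤ Cπ)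
    (hsm : ∀ t, s t ∈ Icc (0:ℝ) 1) (hp : Summable fun t => δ ^ t * p t) (t : ℕ) :
    Summable fun k => δ ^ k * (π (s (t + k)) - p (t + k)) := by
  refine ((sum_pi hδ0 hδ1 hCπ hsm t).sub (sum_shift hδ0 hp t)).congr fun k => ?_
  ring

lemma sum_wp (hδ0 : 0 < δ) (hδ1 : δ < 1) (hCw : ∀ x ∈ Icc (0:ℝ) 1, |w x| ≤ Cw)
    (hsm : ∀ t, s t ∈ Icc (0:ℝ) 1) (hp : Summable fun t => δ ^ t * p t) (t : ℕ) :
    Summable fun k => δ ^ k * (w (s (t + k)) + p (t + k)) := by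
  refine ((sumbd hδ0 hδ1 (fun n => hCw _ (hsm (t + n)))).add (sum_shift hδ0 hp t)).congr
    fun k => ?_
  ring

lemma piVal_eq (hδ0 : 0 < δ) (hδ1 : δ < 1) (hCπ : ∀ x ∈ Icc (0:ℝ) 1, |π x| ≤ Cπ)
    (hsm : ∀ t, s t ∈ Icc (0:ℝ) 1) (hp : Summable fun t => δ ^ t * p t) (t : ℕ) :
    PiVal δ π s p t = (∑' k, δ ^ k * π (s (t + k))) - ∑' k, δ ^ k * p (t + k) := by
  rw [PiVal, ← Summable.tsum_sub (sum_pi hδ0 hδ1 hCπ hsm t) (sum_shift hδ0 hp t)]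
  exact tsum_congr fun k => by ring

lemma wVal_eq (hδ0 : 0 < δ) (hδ1 : δ < 1) (hCw : ∀ x ∈ Icc (0:ℝ) 1, |w x| ≤ Cw)
    (hsm : ∀ t, s t ∈ Icc (0:ℝ) 1) (hp : Summable fun t => δ ^ t * p t) (t : ℕ) :
    WVal δ w s p t = (∑' k, δ ^ k * w (s (t + k))) + ∑' k, δ ^ k * p (t + k) := by
  rw [WVal, ← Summable.tsum_add (sumbd hδ0 hδ1 (fun n => hCw _ (hsm (t + n)))) (sum_shift hδ0 hp t)]
  exact tsum_congr fun k => by ring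

/-- key one-period constraint derived from implementability -/
lemma star_of_impl (hδ0 : 0 < δ) (hδ1 : δ < 1)
    (hCπ : ∀ x ∈ Icc (0:ℝ) 1, |π x| ≤ Cπ) (hCw : ∀ x ∈ Icc (0:ℝ) 1, |w x| ≤ Cw)
    (himp : Implementable δ π w s p) (t : ℕ) :
    π (s (t + 1)) + w (s t) ≤ (1 - δ) * ∑' k, δ ^ k * (π (s (t + 1 + k)) + w (s (t + 1 + k))) := by
  obtain ⟨⟨hsm, hs0, hpsum⟩, hmono, hpnn, hPIC, hEIC⟩ := himp
  have h1 : π (s (t + 1)) / (1 - δ) ≤ PiVal δ π s p (t + 1) := hPIC (t + 1)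
  have h2 : w (s t) / (1 - δ) ≤ WVal δ w s p (t + 1) := hEIC t
  have hsum : PiVal δ π s p (t + 1) + WVal δ w s p (t + 1)
      = ∑' k, δ ^ k * (π (s (t + 1 + k)) + w (s (t + 1 + k))) := by
    have hAB : (∑' k, δ ^ k * π (s (t + 1 + k))) + (∑' k, δ ^ k * w (s (t + 1 + k)))
        = ∑' k, δ ^ k * (π (s (t + 1 + k)) + w (s (t + 1 + k))) := by
      rw [← Summable.tsum_add (sum_pi hδ0 hδ1 hCπ hsm (t + 1))
        (sumbd hδ0 hδ1 (fun n => hCw _ (hsm (t + 1 + n))))]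
      exact tsum_congr fun k => by ring
    rw [piVal_eq hδ0 hδ1 hCπ hsm hpsum (t + 1), wVal_eq hδ0 hδ1 hCw hsm hpsum (t + 1), ← hAB]
    ring
  have h1δ : (0:ℝ) < 1 - δ := by linarith
  have h3 := add_le_add h1 h2
  rw [← add_div, div_le_iff₀ h1δ, hsum] at h3
  rw [mul_comm]
  exact h3


section Necessity
variable {π w : ℝ → ℝ} {s p : ℕ → ℝ} {Cπ Cw : ℝ}

lemma starstar_of_impl (hδ0 : 0 < δ) (hδ1 : δ < 1)
    (hCπ : ∀ x ∈ Icc (0:ℝ) 1, |π x| ≤ Cπ) (hCw : ∀ x ∈ Icc (0:ℝ) 1, |w x| ≤ Cw)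
    (himp : Implementable δ π w s p) (t : ℕ) :
    w (s t) - w (s (t + 1)) ≤ ∑' k, δ ^ (k + 1) *
      ((π (s (t + 1 + (k + 1))) + w (s (t + 1 + (k + 1))))
        - (π (s (t + 1 + k)) + w (s (t + 1 + k)))) := by
  have hsm : ∀ t, s t ∈ Icc (0:ℝ) 1 := himp.1.1
  have hub : ∀ n, |π (s (t + 1 + n)) + w (s (t + 1 + n))| ≤ Cπ + Cw := fun n =>
    (abs_add_le _ _).trans (add_le_add (hCπ _ (hsm _)) (hCw _ (hsm _)))
  have hfs : Summable fun k => δ ^ k * (π (s (t + 1 + k)) + w (s (t + 1 + k))) :=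
    sumbd hδ0 hδ1 hub
  have habel := abel_id hδ0 hfs
  simp only [Nat.add_zero] at habel
  have hstar := star_of_impl hδ0 hδ1 hCπ hCw himp t
  linarith [habel, hstar]

lemma necessity_core
    (hπc : ContinuousOn π (Icc 0 1)) (hwc : ContinuousOn w (Icc 0 1))
    (hGm : StrictMonoOn (fun x => π x + w x) (Icc 0 1))
    (hwa : StrictAntiOn w (Icc 0 1))
    (hδ0 : 0 < δ) (hδ1 : δ < 1)
    (hCπ : ∀ x ∈ Icc (0:ℝ) 1, |π x| ≤ Cπ) (hCw : ∀ x ∈ Icc (0:ℝ) 1, |w x| ≤ Cw)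
    (hsm : ∀ t, s t ∈ Icc (0:ℝ) 1) (hs0 : s 0 = 0) (hmono : Monotone s)
    (hconstr : ∀ t, w (s t) - w (s (t + 1)) ≤ ∑' k, δ ^ (k + 1) *
      ((π (s (t + 1 + (k + 1))) + w (s (t + 1 + (k + 1))))
        - (π (s (t + 1 + k)) + w (s (t + 1 + k)))))
    (hH : δ * (π (⨆ t, s t) - π 0) ≤ w 0 - w (⨆ t, s t)) :
    ∀ t, s t = 0 := by
  have h1δ : (0:ℝ) < 1 - δ := by linarith
  set L := ⨆ t, s t with hLdef
  have hbdd : BddAbove (range s) := ⟨1, by rintro _ ⟨t, rfl⟩; exact (hsm t).2⟩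
  have hsL : ∀ t, s t ≤ L := fun t => le_ciSup hbdd t
  have hL0 : (0:ℝ) ≤ L := hs0 ▸ hsL 0
  have hLmem : L ∈ Icc (0:ℝ) 1 := ⟨hL0, ciSup_le fun t => (hsm t).2⟩
  set u : ℕ → ℝ := fun m => π (s m) + w (s m) with hudef
  set uL : ℝ := π L + w L with huLdef
  have humono : Monotone u := fun i j hij => hGm.monotoneOn (hsm i) (hsm j) (hmono hij)
  have huL : ∀ m, u m ≤ uL := fun m => hGm.monotoneOn (hsm m) hLmem (hsL m)
  have hub : ∀ m, |u m| ≤ Cπ + Cw := fun m =>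
    (abs_add_le _ _).trans (add_le_add (hCπ _ (hsm _)) (hCw _ (hsm _)))
  -- limits
  have htend : Tendsto s atTop (𝓝 L) := tendsto_atTop_ciSup hmono hbdd
  have htendIn : Tendsto s atTop (𝓝[Icc (0:ℝ) 1] L) :=
    tendsto_nhdsWithin_of_tendsto_nhds_of_eventually_within s htend
      (Eventually.of_forall hsm)
  have hwtend : Tendsto (fun n => w (s n)) atTop (𝓝 (w L)) :=
    Tendsto.comp (hwc L hLmem) htendIn
  -- the w-decline sequence
  set e : ℕ → ℝ := fun m => w (s m) - w (s (m + 1)) with hedef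
  have he0 : ∀ m, 0 ≤ e m := fun m =>
    sub_nonneg.2 (hwa.antitoneOn (hsm m) (hsm (m + 1)) (hmono (Nat.le_succ m)))
  have hwL : ∀ n, w L ≤ w (s n) := fun n => hwa.antitoneOn (hsm n) hLmem (hsL n)
  have hpart : ∀ n, ∑ i ∈ Finset.range n, e i = w (s 0) - w (s n) := fun n =>
    Finset.sum_range_sub' (fun i => w (s i)) n
  have hesum : Summable e := summable_of_sum_range_le (c := w (s 0) - w L) he0
    (fun n => by rw [hpart n]; linarith [hwL n])
  have hE : ∑' m, e m = w (s 0) - w L := by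
    refine ((hasSum_iff_tendsto_nat_of_nonneg he0 _).2 ?_).tsum_eq
    have : (fun n => ∑ i ∈ Finset.range n, e i) = fun n => w (s 0) - w (s n) :=
      funext hpart
    rw [this]
    exact tendsto_const_nhds.sub hwtend
  -- the u-increment sequence
  set d : ℕ → ℝ := fun m => u (m + 1) - u m with hddef
  have hd0 : ∀ m, 0 ≤ d m := fun m => sub_nonneg.2 (humono (Nat.le_succ m))
  -- rewrite the constraint in terms of d
  have hconstr' : ∀ t, e t ≤ ∑' k, δ ^ (k + 1) * d (t + 1 + k) := by
    intro t
    refine (hconstr t).trans_eq (tsum_congr fun k => ?_)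
    have h2 : t + 1 + (k + 1) = t + 1 + k + 1 := by omega
    rw [h2]
  -- summability of the inner sums
  have hdsum : ∀ a : ℕ, Summable fun k => δ ^ (k + 1) * d (a + k) := by
    intro a
    have : Summable fun k => δ ^ k * d (a + k) := by
      refine sumbd hδ0 hδ1 (C := 2 * (Cπ + Cw)) fun n => ?_
      calc |d (a + n)| ≤ |u (a + n + 1)| + |u (a + n)| := abs_sub _ _
        _ ≤ 2 * (Cπ + Cw) := by linarith [hub (a + n + 1), hub (a + n)]
    refine (this.mul_left δ).congr fun k => ?_
    rw [pow_succ]; ring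
  -- the majorant
  set Q : ℝ := ∑' k, δ ^ (k + 1) * (uL - u (1 + k)) with hQdef
  have hQsummand : ∀ k, (0:ℝ) ≤ δ ^ (k + 1) * (uL - u (1 + k)) := fun k =>
    mul_nonneg (pow_nonneg hδ0.le _) (sub_nonneg.2 (huL _))
  have hQsum : Summable fun k => δ ^ (k + 1) * (uL - u (1 + k)) := by
    have : Summable fun k => δ ^ k * (uL - u (1 + k)) := by
      refine sumbd hδ0 hδ1 (C := |uL| + (Cπ + Cw)) fun n => ?_
      calc |uL - u (1 + n)| ≤ |uL| + |u (1 + n)| := abs_sub _ _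
        _ ≤ |uL| + (Cπ + Cw) := by linarith [hub (1 + n)]
    refine (this.mul_left δ).congr fun k => ?_
    rw [pow_succ]; ring
  -- step 1 : E ≤ Q
  have hstep1 : ∑' m, e m ≤ Q := by
    refine Summable.tsum_le_of_sum_range_le hesum fun T => ?_
    have hswap : ∑ t ∈ Finset.range T, ∑' k, δ ^ (k + 1) * d (t + 1 + k)
        = ∑' k, ∑ t ∈ Finset.range T, δ ^ (k + 1) * d (t + 1 + k) :=
      (Summable.tsum_finsetSum fun t _ => hdsum (t + 1)).symm
    have hinner : ∀ k, ∑ t ∈ Finset.range T, δ ^ (k + 1) * d (t + 1 + k)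
        = δ ^ (k + 1) * (u (T + 1 + k) - u (1 + k)) := by
      intro k
      rw [← Finset.mul_sum]
      congr 1
      have : ∀ t, d (t + 1 + k) = u (t + 1 + 1 + k) - u (t + 1 + k) := by
        intro t
        have h3 : t + 1 + k + 1 = t + 1 + 1 + k := by omega
        simp only [hddef, h3]
      rw [Finset.sum_congr rfl fun t _ => this t]
      have := Finset.sum_range_sub (f := fun t => u (t + 1 + k)) T
      simpa using this
    calc ∑ t ∈ Finset.range T, e t
        ≤ ∑ t ∈ Finset.range T, ∑' k, δ ^ (k + 1) * d (t + 1 + k) :=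
          Finset.sum_le_sum fun t _ => hconstr' t
      _ = ∑' k, δ ^ (k + 1) * (u (T + 1 + k) - u (1 + k)) := by
          rw [hswap]; exact tsum_congr hinner
      _ ≤ Q := by
          have hsumTk : Summable fun k => δ ^ (k + 1) * (u (T + 1 + k) - u (1 + k)) := by
            have h5 : Summable fun k => δ ^ k * (u (T + 1 + k) - u (1 + k)) := by
              refine sumbd hδ0 hδ1 (C := 2 * (Cπ + Cw)) fun n => ?_
              calc |u (T + 1 + n) - u (1 + n)| ≤ |u (T + 1 + n)| + |u (1 + n)| := abs_sub _ _
                _ ≤ 2 * (Cπ + Cw) := by linarith [hub (T + 1 + n), hub (1 + n)]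
            refine (h5.mul_left δ).congr fun k => ?_
            rw [pow_succ]; ring
          refine Summable.tsum_le_tsum (fun k => ?_) hsumTk hQsum
          exact mul_le_mul_of_nonneg_left (by linarith [huL (T + 1 + k)])
            (pow_nonneg hδ0.le _)
  -- step 2 : closed forms and the equality chain
  set X : ℝ := ∑' k : ℕ, δ ^ (k + 1) * (uL - u 1) with hXdef
  have hXsum : Summable fun k : ℕ => δ ^ (k + 1) * (uL - u 1) := by
    have h5 : Summable fun k : ℕ => δ ^ k * (uL - u 1) :=
      sumbd hδ0 hδ1 (C := |uL - u 1|) fun n => le_refl _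
    refine (h5.mul_left δ).congr fun k => ?_
    rw [pow_succ]; ring
  have hXval : X = δ * ((uL - u 1) / (1 - δ)) := by
    rw [hXdef]
    have h1 : ∀ k : ℕ, δ ^ (k + 1) * (uL - u 1) = δ * (δ ^ k * (uL - u 1)) := fun k => by
      rw [pow_succ]; ring
    rw [tsum_congr h1, tsum_mul_left, tsum_geo_const hδ0 hδ1]
  have hQX : Q ≤ X := by
    refine Summable.tsum_le_tsum (fun k => ?_) hQsum hXsum
    exact mul_le_mul_of_nonneg_left (by linarith [humono (show 1 ≤ 1 + k by omega)])
      (pow_nonneg hδ0.le _)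
  have hu01 : u 0 ≤ u 1 := humono (by omega)
  rw [hs0] at hE
  have hHs : δ * (uL - u 0) ≤ (1 - δ) * (w 0 - w L) := by
    have hring : δ * (uL - u 0) = δ * (π L - π 0) - δ * (w 0 - w L) := by
      simp only [huLdef, hudef]
      rw [hs0]; ring
    have hwl0 : w L ≤ w 0 := by
      have := hwL 0; rw [hs0] at this; exact this
    rw [hring]
    nlinarith [hH]
  have hchain1 : δ * (uL - u 0) ≤ (1 - δ) * Q := by
    calc δ * (uL - u 0) ≤ (1 - δ) * (w 0 - w L) := hHs
      _ = (1 - δ) * (∑' m, e m) := by rw [hE]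
      _ ≤ (1 - δ) * Q := mul_le_mul_of_nonneg_left hstep1 h1δ.le
  have hXQ : (1 - δ) * X = δ * (uL - u 1) := by
    rw [hXval]; field_simp
  have hchain2 : (1 - δ) * Q ≤ δ * (uL - u 1) := by
    rw [← hXQ]; exact mul_le_mul_of_nonneg_left hQX h1δ.le
  have hchain3 : δ * (uL - u 1) ≤ δ * (uL - u 0) :=
    mul_le_mul_of_nonneg_left (by linarith) hδ0.le
  have hu10 : u 1 = u 0 := by
    have heq1 : δ * (uL - u 1) = δ * (uL - u 0) := le_antisymm hchain3 (by linarith)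
    have := mul_left_cancel₀ hδ0.ne' heq1
    linarith
  have hQXeq : Q = X := by
    have heqQX : (1 - δ) * Q = (1 - δ) * X := by linarith
    exact mul_left_cancel₀ (by linarith : (1 - δ) ≠ 0) heqQX
  have hsubsum : Summable fun k : ℕ => δ ^ (k + 1) * (u (1 + k) - u 1) := by
    refine (hXsum.sub hQsum).congr fun k => ?_; ring
  have hdiff : ∑' k : ℕ, δ ^ (k + 1) * (u (1 + k) - u 1) = 0 := by
    have h := Summable.tsum_sub hXsum hQsum
    have h2 : ∀ k : ℕ, δ ^ (k + 1) * (uL - u 1) - δ ^ (k + 1) * (uL - u (1 + k))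
        = δ ^ (k + 1) * (u (1 + k) - u 1) := fun k => by ring
    calc ∑' k : ℕ, δ ^ (k + 1) * (u (1 + k) - u 1)
        = ∑' k : ℕ, (δ ^ (k + 1) * (uL - u 1) - δ ^ (k + 1) * (uL - u (1 + k))) :=
          tsum_congr fun k => (h2 k).symm
      _ = X - Q := h
      _ = 0 := by rw [hQXeq]; ring
  have hterm0 : ∀ k : ℕ, u (1 + k) = u 1 := by
    intro k
    have hnn : ∀ j : ℕ, 0 ≤ δ ^ (j + 1) * (u (1 + j) - u 1) := fun j =>
      mul_nonneg (pow_nonneg hδ0.le _) (sub_nonneg.2 (humono (by omega)))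
    have hle := Summable.le_tsum hsubsum k (fun j _ => hnn j)
    rw [hdiff] at hle
    have hz : δ ^ (k + 1) * (u (1 + k) - u 1) = 0 := le_antisymm hle (hnn k)
    have hpow : δ ^ (k + 1) ≠ 0 := pow_ne_zero _ hδ0.ne'
    rcases mul_eq_zero.1 hz with h | h
    · exact absurd h hpow
    · linarith [sub_eq_zero.1 h, sub_eq_zero.1 h]
  intro t
  have hut : u t = u 0 := by
    cases t with
    | zero => rfl
    | succ n =>
        have h1 : u (1 + n) = u 1 := hterm0 n
        have h2 : (1 : ℕ) + n = n + 1 := by omega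
        rw [h2] at h1
        rw [h1, hu10]
  have hinj : s t = s 0 := by
    refine hGm.injOn (hsm t) (hsm 0) ?_
    simpa only [hudef] using hut
  rw [hinj, hs0]

end Necessity

section Wrap
variable {π w : ℝ → ℝ} {s p : ℕ → ℝ} {Cπ Cw : ℝ}

lemma abs_bound_of_norm {f : ℝ → ℝ} (hf : ContinuousOn f (Icc (0:ℝ) 1)) :
    ∃ C : ℝ, ∀ x ∈ Icc (0:ℝ) 1, |f x| ≤ C := by
  obtain ⟨C, hC⟩ := isCompact_Icc.exists_bound_of_continuousOn hf
  exact ⟨C, fun x hx => by simpa [Real.norm_eq_abs] using hC x hx⟩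

lemma necessity
    (hπc : ContinuousOn π (Icc 0 1)) (hwc : ContinuousOn w (Icc 0 1))
    (hwa : StrictAntiOn w (Icc 0 1))
    (hGm : StrictMonoOn (fun x => π x + w x) (Icc 0 1))
    (hδ0 : 0 < δ) (hδ1 : δ < 1)
    (himp : Implementable δ π w s p) (hnt : ∃ t, s t ≠ 0) :
    ∃ x ∈ Ioc (0:ℝ) 1, w 0 - w x < δ * (π x - π 0) := by
  obtain ⟨Cπ, hCπ⟩ := abs_bound_of_norm hπc
  obtain ⟨Cw, hCw⟩ := abs_bound_of_norm hwc
  obtain ⟨⟨hsm, hs0, hpsum⟩, hmono, hpnn, hPIC, hEIC⟩ := himp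
  set L := ⨆ t, s t with hLdef
  have hbdd : BddAbove (range s) := ⟨1, by rintro _ ⟨t, rfl⟩; exact (hsm t).2⟩
  obtain ⟨t0, ht0⟩ := hnt
  have hst0 : 0 < s t0 := lt_of_le_of_ne (hsm t0).1 (Ne.symm ht0)
  have hL0 : 0 < L := lt_of_lt_of_le hst0 (le_ciSup hbdd t0)
  have hL1 : L ≤ 1 := ciSup_le fun t => (hsm t).2
  refine ⟨L, ⟨hL0, hL1⟩, ?_⟩
  by_contra hcon
  push_neg at hcon
  have hall := necessity_core hπc hwc hGm hwa hδ0 hδ1 hCπ hCw hsm hs0 hmono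
    (fun t => starstar_of_impl hδ0 hδ1 hCπ hCw
      ⟨⟨hsm, hs0, hpsum⟩, hmono, hpnn, hPIC, hEIC⟩ t) (by linarith [hcon])
  exact ht0 (hall t0)

/-- with binding payments, the principal's value is exactly `π (s t) / (1 - δ)`. -/
lemma piVal_binding (hδ0 : 0 < δ) (hδ1 : δ < 1)
    (hCπ : ∀ x ∈ Icc (0:ℝ) 1, |π x| ≤ Cπ)
    (hsm : ∀ t, s t ∈ Icc (0:ℝ) 1)
    (hp : ∀ t, p t = δ * (π (s (t + 1)) - π (s t)) / (1 - δ))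
    (hpsum : Summable fun t => δ ^ t * p t) (t : ℕ) :
    PiVal δ π s p t = π (s t) / (1 - δ) := by
  have h1δ : (0:ℝ) < 1 - δ := by linarith
  have hA : ∀ n, Summable fun k => δ ^ k * π (s (n + k)) := sum_pi hδ0 hδ1 hCπ hsm
  have hhead := tsum_head hδ0 (f := fun n => π (s n)) hA t
  have hSp : (∑' k, δ ^ k * p (t + k)) = (δ / (1 - δ)) *
      ((∑' k, δ ^ k * π (s (t + 1 + k))) - ∑' k, δ ^ k * π (s (t + k))) := by
    have h1 : ∀ k, δ ^ k * p (t + k)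
        = (δ / (1 - δ)) * (δ ^ k * π (s (t + 1 + k)) - δ ^ k * π (s (t + k))) := by
      intro k; rw [hp (t + k)]
      have h2 : t + k + 1 = t + 1 + k := by omega
      rw [h2]; ring
    rw [tsum_congr h1, tsum_mul_left, Summable.tsum_sub (hA (t + 1)) (hA t)]
  rw [piVal_eq hδ0 hδ1 hCπ hsm hpsum t, hSp, hhead]
  field_simp
  ring

end Wrap

section Suff
variable {π w : ℝ → ℝ} {Cπ Cw : ℝ}

lemma sufficiency
    (hπc : ContinuousOn π (Icc 0 1)) (hwc : ContinuousOn w (Icc 0 1))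
    (hwa : StrictAntiOn w (Icc 0 1))
    (hGm : StrictMonoOn (fun x => π x + w x) (Icc 0 1))
    (hδ0 : 0 < δ) (hδ1 : δ < 1)
    (hx : ∃ x ∈ Ioc (0:ℝ) 1, w 0 - w x < δ * (π x - π 0)) :
    ∃ s p : ℕ → ℝ, Implementable δ π w s p ∧ ∃ t, s t ≠ 0 := by
  classical
  have h1δ : (0:ℝ) < 1 - δ := by linarith
  obtain ⟨Cπ, hCπ⟩ := abs_bound_of_norm hπc
  obtain ⟨Cw, hCw⟩ := abs_bound_of_norm hwc
  set G : ℝ → ℝ := fun y => δ * π y + w y with hGdef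
  have hGc : ContinuousOn G (Icc 0 1) := (continuousOn_const.mul hπc).add hwc
  obtain ⟨z, hzmem, hzmax'⟩ := isCompact_Icc.exists_isMaxOn (⟨0, by norm_num⟩ :
    (Icc (0:ℝ) 1).Nonempty) hGc
  have hzmax : ∀ y ∈ Icc (0:ℝ) 1, G y ≤ G z := fun y hy => hzmax' hy
  set Cset : Set ℝ := Icc 0 1 ∩ G ⁻¹' (Ici (G z)) with hCsetdef
  have hCclosed : IsClosed Cset := hGc.preimage_isClosed_of_isClosed isClosed_Icc isClosed_Ici
  have hCne : Cset.Nonempty := ⟨z, hzmem, by simp⟩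
  have hCbdd : BddBelow Cset := ⟨0, fun y hy => hy.1.1⟩
  set xs : ℝ := sInf Cset with hxsdef
  have hxsC : xs ∈ Cset := hCclosed.csInf_mem hCne hCbdd
  have hxsmem : xs ∈ Icc (0:ℝ) 1 := hxsC.1
  have hMx : G xs = G z := le_antisymm (hzmax _ hxsmem) hxsC.2
  have hlow : ∀ y ∈ Icc (0:ℝ) 1, y < xs → G y < G xs := by
    intro y hy hlt
    rcases lt_or_ge (G y) (G xs) with h | h
    · exact h
    · exact absurd (csInf_le hCbdd ⟨hy, by rw [← hMx]; exact h⟩) (not_le.2 hlt)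
  have hM0 : G 0 < G xs := by
    obtain ⟨x₀, hx₀mem, hx₀⟩ := hx
    have h1 : G 0 < G x₀ := by simp only [hGdef]; linarith
    have h2 : G x₀ ≤ G z := hzmax _ ⟨hx₀mem.1.le, hx₀mem.2⟩
    rw [hMx]; linarith
  have hxs0 : 0 < xs := by
    rcases lt_or_ge 0 xs with h | h
    · exact h
    · have : xs = 0 := le_antisymm h hxsmem.1
      rw [this] at hM0; linarith
  -- the one-step extension
  have step : ∀ y, 0 ≤ y → y < xs → ∃ y', (y < y' ∧ y' < xs) ∧
      π y' = π y + (G xs - G y) / δ := by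
    intro y h0 hlt
    have hymem : y ∈ Icc (0:ℝ) 1 := ⟨h0, hlt.le.trans hxsmem.2⟩
    have hGy : G y < G xs := hlow y hymem hlt
    have ht1 : π y < π y + (G xs - G y) / δ := by
      have := div_pos (sub_pos.2 hGy) hδ0; linarith
    have ht2 : π y + (G xs - G y) / δ < π xs := by
      rw [← sub_pos]
      have hww : w xs < w y := hwa hymem hxsmem hlt
      have key : (G xs - G y) / δ < π xs - π y := by
        rw [div_lt_iff₀ hδ0]
        simp only [hGdef]
        nlinarith
      linarith
    have hsub : Icc y xs ⊆ Icc (0:ℝ) 1 := Icc_subset_Icc h0 hxsmem.2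
    have hIVT := intermediate_value_Ioo hlt.le (hπc.mono hsub)
    obtain ⟨y', hy'mem, hy'eq⟩ := hIVT ⟨ht1, ht2⟩
    exact ⟨y', ⟨hy'mem.1, hy'mem.2⟩, hy'eq⟩
  -- the recursively defined path
  let T := {y : ℝ // 0 ≤ y ∧ y < xs}
  let F : T → T := fun y =>
    ⟨(step y.1 y.2.1 y.2.2).choose,
      le_of_lt (lt_of_le_of_lt y.2.1 (step y.1 y.2.1 y.2.2).choose_spec.1.1),
      (step y.1 y.2.1 y.2.2).choose_spec.1.2⟩
  let X : ℕ → T := fun n => Nat.rec (⟨0, le_refl 0, hxs0⟩ : T) (fun _ prev => F prev) n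
  set s : ℕ → ℝ := fun n => (X n).1 with hsdef
  have hXsucc : ∀ n, X (n + 1) = F (X n) := fun n => rfl
  have hlts : ∀ n, s n < s (n + 1) := fun n =>
    (step (X n).1 (X n).2.1 (X n).2.2).choose_spec.1.1
  have hrec : ∀ n, π (s (n + 1)) = π (s n) + (G xs - G (s n)) / δ := fun n =>
    (step (X n).1 (X n).2.1 (X n).2.2).choose_spec.2
  have hsmem : ∀ n, s n ∈ Icc (0:ℝ) 1 := fun n =>
    ⟨(X n).2.1, (X n).2.2.le.trans hxsmem.2⟩
  have hs0 : s 0 = 0 := rfl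
  have hmono : Monotone s := (strictMono_nat_of_lt_succ hlts).monotone
  -- payments and values
  set R : ℕ → ℝ := fun n => (G xs - G (s n)) / δ with hRdef
  have hδR : ∀ n, δ * R n = G xs - G (s n) := fun n => by
    rw [hRdef]; field_simp
  have hR0 : ∀ n, 0 ≤ R n := fun n =>
    div_nonneg (sub_nonneg.2 (by rw [hMx]; exact hzmax _ (hsmem n))) hδ0.le
  have hCπ0 : 0 ≤ Cπ := le_trans (abs_nonneg _) (hCπ 0 (by norm_num))
  have hGb : ∀ n, |G (s n)| ≤ Cπ + Cw := by
    intro n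
    have h1 := hCπ _ (hsmem n)
    have h2 := hCw _ (hsmem n)
    have h3 : |δ * π (s n)| ≤ Cπ := by
      rw [abs_mul, abs_of_nonneg hδ0.le]
      nlinarith [abs_nonneg (π (s n))]
    calc |G (s n)| ≤ |δ * π (s n)| + |w (s n)| := abs_add_le _ _
      _ ≤ Cπ + Cw := add_le_add h3 h2
  set B : ℝ := (|G xs| + (Cπ + Cw)) / δ with hBdef
  have hRb : ∀ n, R n ≤ B := by
    intro n
    refine (div_le_div_iff_of_pos_right hδ0).2 ?_
    linarith [le_abs_self (G xs), hGb n, neg_abs_le (G (s n))]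
  have hgrec : ∀ n, π (s (n + 1)) - π (s n) = R n := fun n => by
    rw [hrec n, hRdef]; ring
  have hb : ∀ t, w (s t) - w (s (t + 1)) = δ * R (t + 1) := by
    intro t
    have h1 := hδR t
    have h2 := hδR (t + 1)
    have h3 : δ * π (s (t + 1)) - δ * π (s t) = δ * R t := by
      linear_combination δ * (hgrec t)
    simp only [hGdef] at h1 h2
    linarith
  set d : ℕ → ℝ := fun m => (π (s (m + 1)) + w (s (m + 1))) - (π (s m) + w (s m)) with hddef
  have hdrec : ∀ m, R m = d m + δ * R (m + 1) := by
    intro m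
    simp only [hddef]
    linarith [hb m, hgrec m]
  clear_value R d
  have hpartial : ∀ n J, ∑ j ∈ Finset.range J, δ ^ j * d (n + j)
      = R n - δ ^ J * R (n + J) := by
    intro n J
    induction J with
    | zero => simp
    | succ J ih =>
        rw [Finset.sum_range_succ, ih]
        have h := hdrec (n + J)
        have hidx : n + J + 1 = n + (J + 1) := by omega
        rw [← hidx, pow_succ]
        linear_combination (-(δ ^ J)) * h
  have hd0 : ∀ m, 0 ≤ d m := by
    intro m
    have := hGm (hsmem m) (hsmem (m + 1)) (hlts m)
    simp only [hddef]
    simpa using this.le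
  have hDhas : ∀ n, HasSum (fun j => δ ^ j * d (n + j)) (R n) := by
    intro n
    refine (hasSum_iff_tendsto_nat_of_nonneg
      (fun j => mul_nonneg (pow_nonneg hδ0.le _) (hd0 _)) _).2 ?_
    have hfn : (fun J => ∑ j ∈ Finset.range J, δ ^ j * d (n + j))
        = fun J => R n - δ ^ J * R (n + J) := funext (hpartial n)
    rw [hfn]
    have h0 : Tendsto (fun J : ℕ => δ ^ J * R (n + J)) atTop (𝓝 0) := by
      have hB := (tendsto_pow_atTop_nhds_zero_of_lt_one hδ0.le hδ1).mul_const B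
      rw [zero_mul] at hB
      refine squeeze_zero (fun J => mul_nonneg (pow_nonneg hδ0.le _) (hR0 _))
        (fun J => ?_) hB
      exact mul_le_mul_of_nonneg_left (hRb _) (pow_nonneg hδ0.le _)
    simpa using tendsto_const_nhds.sub h0
  -- payments
  set p : ℕ → ℝ := fun t => δ * R t / (1 - δ) with hpdef
  have hpnn : ∀ t, 0 ≤ p t := fun t => div_nonneg (mul_nonneg hδ0.le (hR0 t)) h1δ.le
  have hpform : ∀ t, p t = δ * (π (s (t + 1)) - π (s t)) / (1 - δ) := fun t => by
    rw [hpdef, hgrec t]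
  have hpsum : Summable fun t => δ ^ t * p t := by
    refine sumbd hδ0 hδ1 (C := δ * B / (1 - δ)) fun n => ?_
    rw [abs_of_nonneg (hpnn n)]
    exact (div_le_div_iff_of_pos_right h1δ).2 (mul_le_mul_of_nonneg_left (hRb n) hδ0.le)
  have hUsum : ∀ n, Summable fun k => δ ^ k * (π (s (n + k)) + w (s (n + k))) :=
    fun n => sumbd hδ0 hδ1 (C := Cπ + Cw) fun k =>
      (abs_add_le _ _).trans (add_le_add (hCπ _ (hsmem _)) (hCw _ (hsmem _)))
  -- E-IC
  have hEIC : ∀ t, w (s t) / (1 - δ) ≤ WVal δ w s p (t + 1) := by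
    intro t
    have hW : WVal δ w s p (t + 1)
        = (∑' k, δ ^ k * (π (s (t + 1 + k)) + w (s (t + 1 + k))))
          - PiVal δ π s p (t + 1) := by
      have hAB : (∑' k, δ ^ k * π (s (t + 1 + k))) + (∑' k, δ ^ k * w (s (t + 1 + k)))
          = ∑' k, δ ^ k * (π (s (t + 1 + k)) + w (s (t + 1 + k))) := by
        rw [← Summable.tsum_add (sum_pi hδ0 hδ1 hCπ hsmem (t + 1))
          (sumbd hδ0 hδ1 (fun n => hCw _ (hsmem (t + 1 + n))))]
        exact tsum_congr fun k => by ring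
      rw [wVal_eq hδ0 hδ1 hCw hsmem hpsum (t + 1),
        piVal_eq hδ0 hδ1 hCπ hsmem hpsum (t + 1), ← hAB]
      ring
    have habel := abel_id hδ0 (hUsum (t + 1))
    simp only [Nat.add_zero] at habel
    have htail : (∑' k, δ ^ (k + 1) *
        ((π (s (t + 1 + (k + 1))) + w (s (t + 1 + (k + 1))))
          - (π (s (t + 1 + k)) + w (s (t + 1 + k))))) = δ * R (t + 1) := by
      have h1 : ∀ k, δ ^ (k + 1) *
          ((π (s (t + 1 + (k + 1))) + w (s (t + 1 + (k + 1))))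
            - (π (s (t + 1 + k)) + w (s (t + 1 + k))))
          = δ * (δ ^ k * d (t + 1 + k)) := by
        intro k
        have hix : t + 1 + (k + 1) = t + 1 + k + 1 := by omega
        simp only [hddef, hix]
        rw [pow_succ]; ring
      rw [tsum_congr h1, tsum_mul_left, (hDhas (t + 1)).tsum_eq]
    rw [htail] at habel
    have hU2 : (∑' k, δ ^ k * (π (s (t + 1 + k)) + w (s (t + 1 + k))))
        = ((π (s (t + 1)) + w (s (t + 1))) + δ * R (t + 1)) / (1 - δ) := by
      rw [eq_div_iff (ne_of_gt h1δ)]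
      linarith [habel]
    rw [hW, hU2, piVal_binding hδ0 hδ1 hCπ hsmem hpform hpsum (t + 1),
      div_sub_div_same]
    apply le_of_eq
    congr 1
    linarith [hb t]
  refine ⟨s, p, ⟨⟨hsmem, hs0, hpsum⟩, hmono, hpnn, ?_, hEIC⟩, 1, ?_⟩
  · intro t
    exact le_of_eq (piVal_binding hδ0 hδ1 hCπ hsmem hpform hpsum t).symm
  · have : (0:ℝ) < s 1 := by
      have := hlts 0
      rw [hs0] at this
      exact this
    exact ne_of_gt this

end Suff

section Triv
variable {π w : ℝ → ℝ}

lemma pival_triv (hδ0 : 0 < δ) (hδ1 : δ < 1) (t : ℕ) :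
    PiVal δ π (fun _ => (0:ℝ)) (fun _ => (0:ℝ)) t = π 0 / (1 - δ) := by
  have h : ∀ k : ℕ, δ ^ k * (π ((fun _ => (0:ℝ)) (t + k)) - (fun _ => (0:ℝ)) (t + k))
      = δ ^ k * π 0 := fun k => by simp
  rw [PiVal, tsum_congr h, tsum_geo_const hδ0 hδ1]

lemma wval_triv (hδ0 : 0 < δ) (hδ1 : δ < 1) (t : ℕ) :
    WVal δ w (fun _ => (0:ℝ)) (fun _ => (0:ℝ)) t = w 0 / (1 - δ) := by
  have h : ∀ k : ℕ, δ ^ k * (w ((fun _ => (0:ℝ)) (t + k)) + (fun _ => (0:ℝ)) (t + k))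
      = δ ^ k * w 0 := fun k => by simp
  rw [WVal, tsum_congr h, tsum_geo_const hδ0 hδ1]

lemma triv_impl (hδ0 : 0 < δ) (hδ1 : δ < 1) :
    Implementable δ π w (fun _ => (0:ℝ)) (fun _ => (0:ℝ)) := by
  refine ⟨⟨fun t => by norm_num, rfl, by simpa using summable_zero⟩,
    monotone_const, fun t => le_refl 0, fun t => ?_, fun t => ?_⟩
  · rw [pival_triv hδ0 hδ1 t]
  · rw [wval_triv hδ0 hδ1 (t + 1)]

end Triv

section Exist
variable {π w : ℝ → ℝ} {Cπ Cw : ℝ}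

lemma pay_bound (hδ0 : 0 < δ) (hδ1 : δ < 1)
    (hCπ : ∀ x ∈ Icc (0:ℝ) 1, |π x| ≤ Cπ) {s p : ℕ → ℝ}
    (himp : Implementable δ π w s p) (t : ℕ) :
    p t ≤ δ * (2 * Cπ) / (1 - δ) := by
  obtain ⟨⟨hsm, hs0, hpsum⟩, hmono, hpnn, hPIC, hEIC⟩ := himp
  have h1δ : (0:ℝ) < 1 - δ := by linarith
  have hfsum : ∀ n, Summable fun k => δ ^ k * (π (s (n + k)) - p (n + k)) :=
    sum_pip hδ0 hδ1 hCπ hsm hpsum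
  have hhead := tsum_head hδ0 (f := fun n => π (s n) - p n) hfsum t
  have hPt := hPIC t
  have hup : PiVal δ π s p (t + 1) ≤ Cπ / (1 - δ) := by
    have h2 : ∀ k, δ ^ k * (π (s (t + 1 + k)) - p (t + 1 + k)) ≤ δ ^ k * Cπ := by
      intro k
      refine mul_le_mul_of_nonneg_left ?_ (pow_nonneg hδ0.le _)
      have h3 := hpnn (t + 1 + k)
      have h4 := hCπ _ (hsm (t + 1 + k))
      linarith [le_abs_self (π (s (t + 1 + k)))]
    calc PiVal δ π s p (t + 1) ≤ ∑' k, δ ^ k * Cπ :=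
          Summable.tsum_le_tsum h2 (hfsum (t + 1)) (sumbd hδ0 hδ1 (C := |Cπ|) fun _ => le_refl _)
      _ = Cπ / (1 - δ) := tsum_geo_const hδ0 hδ1 Cπ
  have hPiVal_t : PiVal δ π s p t = (π (s t) - p t) + δ * PiVal δ π s p (t + 1) := hhead
  have hb1 : -Cπ ≤ π (s t) := by
    have := hCπ _ (hsm t); linarith [neg_abs_le (π (s t))]
  rw [hPiVal_t] at hPt
  have h5 : δ * PiVal δ π s p (t + 1) ≤ δ * (Cπ / (1 - δ)) :=
    mul_le_mul_of_nonneg_left hup hδ0.le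
  have hx0 : π (s t) / (1 - δ) - π (s t) = δ * π (s t) / (1 - δ) := by
    field_simp; ring
  have h3 : δ * (-Cπ) / (1 - δ) ≤ δ * π (s t) / (1 - δ) :=
    (div_le_div_iff_of_pos_right h1δ).2 (mul_le_mul_of_nonneg_left hb1 hδ0.le)
  have e1 : δ * (-Cπ) / (1 - δ) = -(δ * Cπ / (1 - δ)) := by ring
  have e2 : δ * (2 * Cπ) / (1 - δ) = δ * Cπ / (1 - δ) + δ * Cπ / (1 - δ) := by ring
  have e3 : δ * (Cπ / (1 - δ)) = δ * Cπ / (1 - δ) := by ring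
  linarith

lemma exists_optimal
    (hπc : ContinuousOn π (Icc 0 1)) (hwc : ContinuousOn w (Icc 0 1))
    (hδ0 : 0 < δ) (hδ1 : δ < 1) :
    ∃ s p : ℕ → ℝ, Optimal δ π w s p := by
  classical
  obtain ⟨Cπ, hCπ⟩ := abs_bound_of_norm hπc
  obtain ⟨Cw, hCw⟩ := abs_bound_of_norm hwc
  have hCπ0 : 0 ≤ Cπ := le_trans (abs_nonneg _) (hCπ 0 (by norm_num))
  have hCw0 : 0 ≤ Cw := le_trans (abs_nonneg _) (hCw 0 (by norm_num))
  have h1δ : (0:ℝ) < 1 - δ := by linarith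
  set K : ℝ := δ * (2 * Cπ) / (1 - δ) with hKdef
  have hK0 : 0 ≤ K := by positivity
  let Xsp := ℕ → (Icc (0:ℝ) 1 × Icc (0:ℝ) K)
  let sv : ℕ → Xsp → ℝ := fun t x => ((x t).1 : ℝ)
  let pv : ℕ → Xsp → ℝ := fun t x => ((x t).2 : ℝ)
  have hsvc : ∀ t, Continuous (sv t) := fun t =>
    continuous_subtype_val.comp ((continuous_apply t).fst)
  have hpvc : ∀ t, Continuous (pv t) := fun t =>
    continuous_subtype_val.comp ((continuous_apply t).snd)
  have hπr : Continuous fun y : Icc (0:ℝ) 1 => π y :=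
    continuousOn_iff_continuous_restrict.mp hπc
  have hwr : Continuous fun y : Icc (0:ℝ) 1 => w y :=
    continuousOn_iff_continuous_restrict.mp hwc
  have hπsvc : ∀ t, Continuous fun x : Xsp => π (sv t x) := fun t =>
    hπr.comp ((continuous_apply t).fst)
  have hwsvc : ∀ t, Continuous fun x : Xsp => w (sv t x) := fun t =>
    hwr.comp ((continuous_apply t).fst)
  let pif : ℕ → Xsp → ℝ := fun t x => ∑' k, δ ^ k * (π (sv (t + k) x) - pv (t + k) x)
  let wif : ℕ → Xsp → ℝ := fun t x => ∑' k, δ ^ k * (w (sv (t + k) x) + pv (t + k) x)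
  have hsvb : ∀ t (x : Xsp), sv t x ∈ Icc (0:ℝ) 1 := fun t x => (x t).1.2
  have hpvb : ∀ t (x : Xsp), pv t x ∈ Icc (0:ℝ) K := fun t x => (x t).2.2
  have hpifc : ∀ t, Continuous (pif t) := by
    intro t
    refine continuous_tsum (fun k => ?_) ((sumgeo hδ0 hδ1).mul_right (Cπ + K)) ?_
    · exact continuous_const.mul ((hπsvc (t + k)).sub (hpvc (t + k)))
    · intro k x
      rw [Real.norm_eq_abs, abs_mul, abs_of_nonneg (pow_nonneg hδ0.le k)]
      refine mul_le_mul_of_nonneg_left ?_ (pow_nonneg hδ0.le k)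
      have h1 := hCπ _ (hsvb (t + k) x)
      have h2 := hpvb (t + k) x
      have h3 : |pv (t + k) x| ≤ K := abs_le.2 ⟨by linarith [h2.1], h2.2⟩
      calc |π (sv (t + k) x) - pv (t + k) x|
          ≤ |π (sv (t + k) x)| + |pv (t + k) x| := abs_sub _ _
        _ ≤ Cπ + K := add_le_add h1 h3
  have hwifc : ∀ t, Continuous (wif t) := by
    intro t
    refine continuous_tsum (fun k => ?_) ((sumgeo hδ0 hδ1).mul_right (Cw + K)) ?_
    · exact continuous_const.mul ((hwsvc (t + k)).add (hpvc (t + k)))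
    · intro k x
      rw [Real.norm_eq_abs, abs_mul, abs_of_nonneg (pow_nonneg hδ0.le k)]
      refine mul_le_mul_of_nonneg_left ?_ (pow_nonneg hδ0.le k)
      have h1 := hCw _ (hsvb (t + k) x)
      have h2 := hpvb (t + k) x
      have h3 : |pv (t + k) x| ≤ K := abs_le.2 ⟨by linarith [h2.1], h2.2⟩
      calc |w (sv (t + k) x) + pv (t + k) x|
          ≤ |w (sv (t + k) x)| + |pv (t + k) x| := abs_add_le _ _
        _ ≤ Cw + K := add_le_add h1 h3
  set Γ : Set Xsp := {x | sv 0 x = 0}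
    ∩ ({x | Monotone fun t => sv t x}
    ∩ ({x | ∀ t, π (sv t x) / (1 - δ) ≤ pif t x}
    ∩ {x | ∀ t, w (sv t x) / (1 - δ) ≤ wif (t + 1) x})) with hΓdef
  have hΓclosed : IsClosed Γ := by
    refine IsClosed.inter (isClosed_eq (hsvc 0) continuous_const)
      (IsClosed.inter ?_ (IsClosed.inter ?_ ?_))
    · have : {x : Xsp | Monotone fun t => sv t x}
          = ⋂ (i : ℕ) (j : ℕ) (_ : i ≤ j), {x | sv i x ≤ sv j x} := by
        ext x
        simp only [mem_iInter, mem_setOf_eq]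
        exact ⟨fun h i j hij => h hij, fun h i j hij => h i j hij⟩
      rw [this]
      exact isClosed_iInter fun i => isClosed_iInter fun j =>
        isClosed_iInter fun _ => isClosed_le (hsvc i) (hsvc j)
    · have : {x : Xsp | ∀ t, π (sv t x) / (1 - δ) ≤ pif t x}
          = ⋂ (t : ℕ), {x | π (sv t x) / (1 - δ) ≤ pif t x} := by
        ext x; simp [mem_iInter]
      rw [this]
      exact isClosed_iInter fun t =>
        isClosed_le ((hπsvc t).div_const _) (hpifc t)
    · have : {x : Xsp | ∀ t, w (sv t x) / (1 - δ) ≤ wif (t + 1) x}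
          = ⋂ (t : ℕ), {x | w (sv t x) / (1 - δ) ≤ wif (t + 1) x} := by
        ext x; simp [mem_iInter]
      rw [this]
      exact isClosed_iInter fun t =>
        isClosed_le ((hwsvc t).div_const _) (hwifc (t + 1))
  -- the correspondence between Γ and implementable contracts
  have hmemimp : ∀ x ∈ Γ, Implementable δ π w (fun t => sv t x) (fun t => pv t x) := by
    intro x hx
    obtain ⟨hx0, hxmono, hxP, hxE⟩ := hx
    refine ⟨⟨fun t => hsvb t x, hx0, ?_⟩, hxmono, fun t => (hpvb t x).1, hxP, hxE⟩
    refine sumbd hδ0 hδ1 (C := K) fun n => ?_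
    exact abs_le.2 ⟨by linarith [(hpvb n x).1], (hpvb n x).2⟩
  have himpmem : ∀ s p : ℕ → ℝ, Implementable δ π w s p →
      ∃ x ∈ Γ, (∀ t, sv t x = s t) ∧ (∀ t, pv t x = p t) := by
    intro s p himp
    refine ⟨fun t => (⟨s t, himp.1.1 t⟩, ⟨p t, himp.2.2.1 t, pay_bound hδ0 hδ1 hCπ himp t⟩),
      ⟨himp.1.2.1, himp.2.1, himp.2.2.2.1, himp.2.2.2.2⟩, fun t => rfl, fun t => rfl⟩
  -- maximize
  have hΓne : Γ.Nonempty := by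
    obtain ⟨x, hx, _, _⟩ := himpmem (fun _ => 0) (fun _ => 0) (triv_impl hδ0 hδ1)
    exact ⟨x, hx⟩
  obtain ⟨xm, hxmΓ, hxmmax⟩ := (hΓclosed.isCompact).exists_isMaxOn hΓne (hpifc 0).continuousOn
  refine ⟨fun t => sv t xm, fun t => pv t xm, hmemimp xm hxmΓ, ?_⟩
  intro s' p' h'
  obtain ⟨x', hx'Γ, hs', hp'⟩ := himpmem s' p' h'
  have h1 : PiVal δ π s' p' 0 = pif 0 x' := by
    rw [PiVal]
    exact tsum_congr fun k => by rw [hs', hp']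
  have h2 : pif 0 xm = PiVal δ π (fun t => sv t xm) (fun t => pv t xm) 0 := rfl
  rw [h1, ← h2]
  exact hxmmax hx'Γ

end Exist

section Final
variable {π w : ℝ → ℝ}

lemma pival_ge {s p : ℕ → ℝ} (himp : Implementable δ π w s p) :
    π 0 / (1 - δ) ≤ PiVal δ π s p 0 := by
  have h := himp.2.2.2.1 0
  rw [himp.1.2.1] at h
  exact h

lemma pival_triv_le (hπc : ContinuousOn π (Icc 0 1)) (hδ0 : 0 < δ) (hδ1 : δ < 1)
    {s p : ℕ → ℝ} (himp : Implementable δ π w s p) (hz : ∀ t, s t = 0) :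
    PiVal δ π s p 0 ≤ π 0 / (1 - δ) := by
  obtain ⟨Cπ, hCπ⟩ := abs_bound_of_norm hπc
  obtain ⟨⟨hsm, hs0, hpsum⟩, hmono, hpnn, hPIC, hEIC⟩ := himp
  calc PiVal δ π s p 0 ≤ ∑' k : ℕ, δ ^ k * π 0 := by
        refine Summable.tsum_le_tsum (fun k => ?_) (sum_pip hδ0 hδ1 hCπ hsm hpsum 0)
          (sumbd hδ0 hδ1 (C := |π 0|) fun _ => le_refl _)
        refine mul_le_mul_of_nonneg_left ?_ (pow_nonneg hδ0.le _)
        rw [hz (0 + k)]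
        linarith [hpnn (0 + k)]
    _ = π 0 / (1 - δ) := tsum_geo_const hδ0 hδ1 _

end Final
end Main
end Aux

/-- Discount-factor thresholds for nontrivial contracts and full transfer. -/
theorem discount_thresholds
    (π w : ℝ → ℝ)
    (hπc : ContinuousOn π (Set.Icc 0 1)) (hwc : ContinuousOn w (Set.Icc 0 1))
    (hπm : StrictMonoOn π (Set.Icc 0 1)) (hwa : StrictAntiOn w (Set.Icc 0 1))
    (hGm : StrictMonoOn (fun x => π x + w x) (Set.Icc 0 1)) :
    ∃ δlow δhigh : ℝ, 0 ≤ δlow ∧ δlow ≤ δhigh ∧ δhigh ≤ 1 ∧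
      ∀ δ ∈ Set.Ioo (0 : ℝ) 1,
        ((∃ s p : ℕ → ℝ, Optimal δ π w s p ∧ ∃ t, s t ≠ 0) ↔ δlow < δ) ∧
        (∀ sbar : ℝ, IsLeast (MaxSet δ π w) sbar →
          (δ < δhigh → sbar < 1) ∧ (δhigh < δ → sbar = 1)) := by
  classical
  have h0mem : (0:ℝ) ∈ Icc (0:ℝ) 1 := by norm_num
  have h1mem : (1:ℝ) ∈ Icc (0:ℝ) 1 := by norm_num
  have hxmem' : ∀ x ∈ Ioc (0:ℝ) 1, x ∈ Icc (0:ℝ) 1 := fun x hx => ⟨hx.1.le, hx.2⟩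
  have hπx : ∀ x ∈ Ioc (0:ℝ) 1, 0 < π x - π 0 := fun x hx =>
    sub_pos.2 (hπm h0mem (hxmem' x hx) hx.1)
  have hwx : ∀ x ∈ Ioc (0:ℝ) 1, 0 < w 0 - w x := fun x hx =>
    sub_pos.2 (hwa h0mem (hxmem' x hx) hx.1)
  set c : ℝ → ℝ := fun x => (w 0 - w x) / (π x - π 0) with hcdef
  have hc0 : ∀ x ∈ Ioc (0:ℝ) 1, 0 < c x := fun x hx =>
    div_pos (hwx x hx) (hπx x hx)
  have hc1 : ∀ x ∈ Ioc (0:ℝ) 1, c x < 1 := by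
    intro x hx
    rw [hcdef]
    rw [div_lt_one (hπx x hx)]
    have := hGm h0mem (hxmem' x hx) hx.1
    simp only at this
    linarith
  set S : Set ℝ := c '' (Ioc 0 1) with hSdef
  have hSne : S.Nonempty := ⟨c 1, 1, ⟨zero_lt_one, le_refl 1⟩, rfl⟩
  have hSbdd : BddBelow S := ⟨0, by rintro r ⟨x, hx, rfl⟩; exact (hc0 x hx).le⟩
  set δlow : ℝ := sInf S with hlowdef
  have hδlow0 : 0 ≤ δlow := le_csInf hSne (by rintro r ⟨x, hx, rfl⟩; exact (hc0 x hx).le)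
  have hδlow1 : δlow < 1 :=
    lt_of_le_of_lt (csInf_le hSbdd ⟨1, ⟨zero_lt_one, le_refl 1⟩, rfl⟩)
      (hc1 1 ⟨zero_lt_one, le_refl 1⟩)
  -- δhigh
  set Tset : Set ℝ := {δ' | δ' ∈ Ioo (0:ℝ) 1 ∧ IsLeast (MaxSet δ' π w) 1} with hTdef
  have hTbdd : BddBelow (Tset ∪ {1}) := by
    refine ⟨0, ?_⟩
    rintro b (hb | hb)
    · exact hb.1.1.le
    · simp only [mem_singleton_iff] at hb; rw [hb]; norm_num
  have hTne : (Tset ∪ {1}).Nonempty := ⟨1, mem_union_right _ rfl⟩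
  set δhigh : ℝ := sInf (Tset ∪ {1}) with hhighdef
  have hTlow : ∀ δ' ∈ Tset, δlow < δ' := by
    rintro δ' ⟨hδ'mem, hleast⟩
    have h1max : ∀ y ∈ Icc (0:ℝ) 1, δ' * π y + w y ≤ δ' * π 1 + w 1 := hleast.1.2
    have h0notmax : (0:ℝ) ∉ MaxSet δ' π w := by
      intro h
      have := hleast.2 h
      linarith
    have hnot : ¬ (∀ y ∈ Icc (0:ℝ) 1, δ' * π y + w y ≤ δ' * π 0 + w 0) :=
      fun hall => h0notmax ⟨h0mem, hall⟩
    push_neg at hnot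
    obtain ⟨y, hy, hgy⟩ := hnot
    have hstrict : δ' * π 0 + w 0 < δ' * π 1 + w 1 := lt_of_lt_of_le hgy (h1max y hy)
    have hc1' : c 1 < δ' := by
      rw [hcdef, div_lt_iff₀ (hπx 1 ⟨zero_lt_one, le_refl 1⟩)]
      nlinarith
    exact lt_of_le_of_lt (csInf_le hSbdd ⟨1, ⟨zero_lt_one, le_refl 1⟩, rfl⟩) hc1'
  have hlowhigh : δlow ≤ δhigh := by
    refine le_csInf hTne ?_
    rintro b (hb | hb)
    · exact (hTlow b hb).le
    · simp only [mem_singleton_iff] at hb; rw [hb]; exact hδlow1.le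
  have hhigh1 : δhigh ≤ 1 := csInf_le hTbdd (mem_union_right _ rfl)
  refine ⟨δlow, δhigh, hδlow0, hlowhigh, hhigh1, ?_⟩
  rintro δ ⟨hδ0, hδ1⟩
  constructor
  · constructor
    · rintro ⟨s, p, hopt, hnt⟩
      obtain ⟨x, hxmem, hx⟩ := necessity hπc hwc hwa hGm hδ0 hδ1 hopt.1 hnt
      have hcx : c x < δ := by
        rw [hcdef, div_lt_iff₀ (hπx x hxmem)]
        linarith
      exact lt_of_le_of_lt (csInf_le hSbdd ⟨x, hxmem, rfl⟩) hcx
    · intro hlt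
      obtain ⟨r, hrS, hrδ⟩ := exists_lt_of_csInf_lt hSne hlt
      obtain ⟨x, hxmem, rfl⟩ := hrS
      have hx : w 0 - w x < δ * (π x - π 0) := by
        rw [hcdef] at hrδ
        rw [div_lt_iff₀ (hπx x hxmem)] at hrδ
        linarith
      obtain ⟨s₀, p₀, himp₀, hnt₀⟩ := sufficiency hπc hwc hwa hGm hδ0 hδ1 ⟨x, hxmem, hx⟩
      obtain ⟨sm, pm, hoptm⟩ := exists_optimal hπc hwc hδ0 hδ1
      by_cases hms : ∃ t, sm t ≠ 0
      · exact ⟨sm, pm, hoptm, hms⟩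
      · push_neg at hms
        refine ⟨s₀, p₀, ⟨himp₀, ?_⟩, hnt₀⟩
        intro s' p' h'
        have h1 := hoptm.2 s' p' h'
        have h2 := pival_triv_le hπc hδ0 hδ1 hoptm.1 hms
        have h3 := pival_ge himp₀
        linarith
  · intro sbar hsbar
    have hsbarIcc : sbar ∈ Icc (0:ℝ) 1 := hsbar.1.1
    constructor
    · intro hlt
      rcases lt_or_eq_of_le hsbarIcc.2 with h | h
      · exact h
      · exfalso
        have hδT : δ ∈ Tset := ⟨⟨hδ0, hδ1⟩, h ▸ hsbar⟩
        have : δhigh ≤ δ := csInf_le hTbdd (mem_union_left _ hδT)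
        linarith
    · intro hgt
      obtain ⟨δ₀, hδ₀mem, hδ₀lt⟩ := exists_lt_of_csInf_lt hTne hgt
      rcases hδ₀mem with hδ₀T | hδ₀1
      · obtain ⟨hδ₀Ioo, hleast₀⟩ := hδ₀T
        by_contra hne
        have hs1 : sbar < 1 := lt_of_le_of_ne hsbarIcc.2 hne
        have hle : δ₀ * π sbar + w sbar ≤ δ₀ * π 1 + w 1 := hleast₀.1.2 sbar hsbarIcc
        have h4 : δ₀ * π sbar + w sbar < δ₀ * π 1 + w 1 := by
          rcases lt_or_eq_of_le hle with h | h
          · exact h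
          · exfalso
            have hsmem : sbar ∈ MaxSet δ₀ π w := by
              refine ⟨hsbarIcc, fun y hy => ?_⟩
              have := hleast₀.1.2 y hy
              linarith
            have := hleast₀.2 hsmem
            linarith
        have h5 : π sbar < π 1 := hπm hsbarIcc h1mem hs1
        have h7 : (δ - δ₀) * π sbar < (δ - δ₀) * π 1 :=
          mul_lt_mul_of_pos_left h5 (by linarith)
        have e1 : δ * π sbar = δ₀ * π sbar + (δ - δ₀) * π sbar := by ring
        have e2 : δ * π 1 = δ₀ * π 1 + (δ - δ₀) * π 1 := by ring
        have h8 := hsbar.1.2 1 h1mem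
        linarith
      · simp only [mem_singleton_iff] at hδ₀1
        rw [hδ₀1] at hδ₀lt
        linarith
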